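/- Every vertex y_i of Δ(S,𝒞,Y) is a shedding vertex: no face of the link of y_i is a facet of the deletion of y_i. -/
import Mathlib


open Sum

/-- Faces of the simplicial complex `Δ(S,𝒞,Y)` on vertex set
`{xᵢ : i ∈ S} ∪ {yᵢ : i ∈ Y}` (encoded inside `Fin n ⊕ Fin n`). -/
def DFace (n : ℕ) (S : Finset (Fin n)) (𝒞 : Set (Finset (Fin n))) (Y : Finset (Fin n))
    (F : Finset (Fin n ⊕ Fin n)) : Prop :=
  (∀ i : Fin n, inl i ∈ F → i ∈ S) ∧
  (∀ i : Fin n, inr i ∈ F → i ∈ Y) ∧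
  (∀ i : Fin n, ¬(inl i ∈ F ∧ inr i ∈ F)) ∧
  (∀ C ∈ 𝒞, C ⊆ Y → ¬(C.image inr ⊆ F))

/-- Every vertex `yᵢ` of `Δ(S,𝒞,Y)` is a shedding vertex: no face of the link of `yᵢ`
is a facet (maximal face) of the deletion of `yᵢ`. -/
theorem y_vertex_is_shedding (n : ℕ) (S : Finset (Fin n)) (𝒞 : Set (Finset (Fin n)))
    (Y : Finset (Fin n)) (hYS : Y ⊆ S) (h𝒞S : ∀ C ∈ 𝒞, C ⊆ S)
    (i : Fin n) (hiY : i ∈ Y) (hi𝒞 : ({i} : Finset (Fin n)) ∉ 𝒞)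
    (F : Finset (Fin n ⊕ Fin n))
    (hlink : inr i ∉ F ∧ DFace n S 𝒞 Y F ∧ DFace n S 𝒞 Y (insert (inr i) F)) :
    ¬((DFace n S 𝒞 Y F ∧ inr i ∉ F) ∧
      ∀ G : Finset (Fin n ⊕ Fin n), (DFace n S 𝒞 Y G ∧ inr i ∉ G) → F ⊆ G → F = G) := by
  rintro ⟨-, hmax⟩
  obtain ⟨hiF, ⟨h1, h2, h3, h4⟩, ⟨_, _, h3', _⟩⟩ := hlink
  have hxi : inl i ∉ F := fun h =>
    h3' i ⟨Finset.mem_insert_of_mem h, Finset.mem_insert_self _ _⟩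
  have hG : DFace n S 𝒞 Y (insert (inl i) F) := by
    refine ⟨?_, ?_, ?_, ?_⟩
    · intro j hj
      rcases Finset.mem_insert.mp hj with h | h
      · cases Sum.inl.inj h; exact hYS hiY
      · exact h1 j h
    · intro j hj
      rcases Finset.mem_insert.mp hj with h | h
      · exact absurd h (by simp)
      · exact h2 j h
    · intro j ⟨hl, hr⟩
      have hrF : inr j ∈ F := by
        rcases Finset.mem_insert.mp hr with h | h
        · exact absurd h (by simp)
        · exact h
      rcases Finset.mem_insert.mp hl with h | h
      · cases Sum.inl.inj h; exact hiF hrF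
      · exact h3 j ⟨h, hrF⟩
    · intro C hC hCY hsub
      refine h4 C hC hCY fun a ha => ?_
      have := hsub ha
      rcases Finset.mem_insert.mp this with h | h
      · obtain ⟨b, _, hb⟩ := Finset.mem_image.mp ha
        exact absurd (hb.trans h) (by simp)
      · exact h
  have hne : inr i ∉ insert (inl i) F := by
    intro h
    rcases Finset.mem_insert.mp h with h | h
    · exact absurd h (by simp)
    · exact hiF h
  have := hmax _ ⟨hG, hne⟩ (Finset.subset_insert _ _)
  exact hxi (this ▸ Finset.mem_insert_self _ _)
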